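/- Let c₁, c_p, c_{p²} be real with c₁ > 0, c_{p²} > 0 and c_{p²} + |c_p| < c₁, and suppose |c_p|(c_{p²} + c₁) < 4 c_{p²} c₁. Then min_{|w|=1} |c₁ + c_p w + c_{p²} w²| = (c₁ − c_{p²})·√(1 − c_p²/(4 c₁ c_{p²})). -/

import Mathlib

private lemma key_alg (c1 cp cp2 a b : ℝ) (hab : a ^ 2 + b ^ 2 = 1) :
    (c1 + cp * a + cp2 * (a ^ 2 - b ^ 2)) ^ 2 + (b * (cp + 2 * cp2 * a)) ^ 2
      = 4 * c1 * cp2 * a ^ 2 + 2 * cp * (c1 + cp2) * a + cp ^ 2 + (c1 - cp2) ^ 2 := by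
  have hb2 : b ^ 2 = 1 - a ^ 2 := by linarith
  have h1 : (b * (cp + 2 * cp2 * a)) ^ 2 = b ^ 2 * (cp + 2 * cp2 * a) ^ 2 := by ring
  rw [h1, hb2]; ring

private lemma normf (c1 cp cp2 a b : ℝ) (hab : a ^ 2 + b ^ 2 = 1) :
    ‖(c1 : ℂ) + (cp : ℂ) * ((a : ℂ) + (b : ℂ) * Complex.I)
        + (cp2 : ℂ) * ((a : ℂ) + (b : ℂ) * Complex.I) ^ 2‖
      = Real.sqrt (4 * c1 * cp2 * a ^ 2 + 2 * cp * (c1 + cp2) * a + cp ^ 2 + (c1 - cp2) ^ 2) := by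
  have hf : (c1 : ℂ) + (cp : ℂ) * ((a : ℂ) + (b : ℂ) * Complex.I)
        + (cp2 : ℂ) * ((a : ℂ) + (b : ℂ) * Complex.I) ^ 2
      = ((c1 + cp * a + cp2 * (a ^ 2 - b ^ 2) : ℝ) : ℂ)
        + ((b * (cp + 2 * cp2 * a) : ℝ) : ℂ) * Complex.I := by
    push_cast
    linear_combination (cp2 : ℂ) * (b : ℂ) ^ 2 * Complex.I_sq
  rw [hf, Complex.norm_add_mul_I, key_alg c1 cp cp2 a b hab]

theorem stmt_19 (c1 cp cp2 : ℝ) (h1 : 0 < c1) (h2 : 0 < cp2) (h : cp2 + |cp| < c1)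
    (hcond : |cp| * (cp2 + c1) < 4 * cp2 * c1) :
    IsLeast {v : ℝ | ∃ w : ℂ, ‖w‖ = 1 ∧
        v = ‖(c1 : ℂ) + (cp : ℂ) * w + (cp2 : ℂ) * w ^ 2‖}
      ((c1 - cp2) * Real.sqrt (1 - cp ^ 2 / (4 * c1 * cp2))) := by
  have habs : 0 ≤ |cp| := abs_nonneg cp
  have hc : cp2 < c1 := by linarith
  have h4 : (0:ℝ) < 4 * c1 * cp2 := by positivity
  have hcpsq : cp ^ 2 < 4 * c1 * cp2 := by
    have hle : |cp| ≤ cp2 + c1 := by linarith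
    nlinarith [sq_abs cp, mul_le_mul_of_nonneg_left hle habs]
  have hK : 0 < 1 - cp ^ 2 / (4 * c1 * cp2) := by
    rw [sub_pos, div_lt_one h4]; exact hcpsq
  set M := (c1 - cp2) * Real.sqrt (1 - cp ^ 2 / (4 * c1 * cp2)) with hMdef
  have hM : 0 ≤ M := mul_nonneg (by linarith) (Real.sqrt_nonneg _)
  have hM2 : M ^ 2 = (c1 - cp2) ^ 2 * (1 - cp ^ 2 / (4 * c1 * cp2)) := by
    rw [hMdef, mul_pow, Real.sq_sqrt hK.le]
  have gident : ∀ a : ℝ,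
      4 * c1 * cp2 * a ^ 2 + 2 * cp * (c1 + cp2) * a + cp ^ 2 + (c1 - cp2) ^ 2
        = (c1 - cp2) ^ 2 * (1 - cp ^ 2 / (4 * c1 * cp2))
          + 4 * c1 * cp2 * (a + cp * (c1 + cp2) / (4 * c1 * cp2)) ^ 2 := by
    intro a; field_simp; ring
  constructor
  · -- membership
    set a : ℝ := -(cp * (c1 + cp2) / (4 * c1 * cp2)) with hadef
    have ha1 : a ^ 2 ≤ 1 := by
      rw [hadef, show (-(cp * (c1 + cp2) / (4 * c1 * cp2))) ^ 2
          = (cp * (c1 + cp2)) ^ 2 / (4 * c1 * cp2) ^ 2 by ring,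
        div_le_one (by positivity)]
      nlinarith [mul_self_le_mul_self (by positivity : (0:ℝ) ≤ |cp| * (cp2 + c1)) hcond.le,
        sq_abs cp]
    set b : ℝ := Real.sqrt (1 - a ^ 2) with hbdef
    have hab : a ^ 2 + b ^ 2 = 1 := by
      rw [hbdef, Real.sq_sqrt (by linarith)]; ring
    refine ⟨(a : ℂ) + (b : ℂ) * Complex.I, ?_, ?_⟩
    · rw [Complex.norm_add_mul_I, hab, Real.sqrt_one]
    · rw [normf c1 cp cp2 a b hab, gident a]
      have hz : (a + cp * (c1 + cp2) / (4 * c1 * cp2)) = 0 := by rw [hadef]; ring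
      rw [hz]
      rw [show (c1 - cp2) ^ 2 * (1 - cp ^ 2 / (4 * c1 * cp2)) + 4 * c1 * cp2 * 0 ^ 2
          = M ^ 2 by rw [hM2]; ring]
      rw [Real.sqrt_sq hM]
  · -- lower bound
    rintro v ⟨w, hw, rfl⟩
    have hab : w.re ^ 2 + w.im ^ 2 = 1 := by
      have := hw
      have h0 : ‖w‖ ^ 2 = 1 := by rw [this]; norm_num
      rw [Complex.sq_norm, Complex.normSq_apply] at h0
      linarith [h0, sq_abs w.re]
    have hwrepr : (w.re : ℂ) + (w.im : ℂ) * Complex.I = w := Complex.re_add_im w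
    rw [← hwrepr, normf c1 cp cp2 w.re w.im hab]
    calc M = Real.sqrt (M ^ 2) := (Real.sqrt_sq hM).symm
      _ ≤ _ := by
          apply Real.sqrt_le_sqrt
          rw [gident w.re, hM2]
          nlinarith [sq_nonneg (w.re + cp * (c1 + cp2) / (4 * c1 * cp2))]
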